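/- Let (λ_k)_{k≥0} be scalars in a field of characteristic zero satisfying (jλ_k − kλ_j)λ_{j+k} = (j−k)λ_jλ_k for all j,k ≥ 1, with λ_1 ≠ 0 and λ_2 = 0. Then λ_k = 0 for all k ≥ 2. -/
import Mathlib

theorem stmt_9 (K : Type*) [Field K] [CharZero K] (lam : ℕ → K)
    (hpre : ∀ j k : ℕ, 1 ≤ j → 1 ≤ k →
      ((j : K) * lam k - (k : K) * lam j) * lam (j + k)
        = ((j : K) - (k : K)) * lam j * lam k)
    (h1 : lam 1 ≠ 0) (h2 : lam 2 = 0) :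
    ∀ k : ℕ, 2 ≤ k → lam k = 0 := by
  intro k hk
  induction k, hk using Nat.le_induction with
  | base => exact h2
  | succ n hn ih =>
    have h := hpre 1 n le_rfl (by omega)
    rw [ih] at h
    have hn0 : (n : K) ≠ 0 := Nat.cast_ne_zero.mpr (by omega)
    have : lam (1 + n) = 0 := by
      have hm : (n : K) * lam 1 * lam (1 + n) = 0 := by linear_combination -h
      rcases mul_eq_zero.mp hm with h' | h'
      · exact absurd ((mul_eq_zero.mp h').resolve_left hn0) h1
      · exact h'
    simpa [Nat.add_comm] using this
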